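/- For n = 5k+4, the coefficient of b^{k+1+4m+i} in p_n(b) (for i = 0,1,2,3 and 0 ≤ 4m+i ≤ 4k+3) is congruent mod 5 to c_i · (-1)^m · C(k,m), where (c_0,c_1,c_2,c_3) = (2,4,3,1). -/

import Mathlib

open Polynomial PowerSeries

/-- The binomial-series expansion of `(1 - q^k)^(b-1)` as a formal power series
in `q` over `ℚ[b]` (with `b := X`): the coefficient of `q^(k·j)` is
`(-1)^j · binom(b-1, j) = (-1)^j · (b-1)(b-2)⋯(b-j)/j!`. -/
noncomputable def etaFactor (k : ℕ) : PowerSeries (Polynomial ℚ) :=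
  PowerSeries.mk fun n =>
    if k ∣ n then
      (((-1) ^ (n / k) / ((n / k).factorial : ℚ)) : ℚ) •
        (descPochhammer (Polynomial ℚ) (n / k)).eval (Polynomial.X - 1)
    else 0

/-- `hanPoly n` is the polynomial `p_n(b)` defined by the formal power series
identity `∏_{k≥1} (1-q^k)^(b-1) = Σ_{n≥0} (q^n/n!)·p_n(b)`; since factors with
`k > n` do not affect the coefficient of `q^n`, the infinite product may be
truncated at `k = n`. -/
noncomputable def hanPoly (n : ℕ) : Polynomial ℚ :=
  (n.factorial : ℚ) •
    PowerSeries.coeff n (∏ k ∈ Finset.Icc 1 n, etaFactor k)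

noncomputable section CRMF

abbrev RQ := Polynomial ℚ

noncomputable def ec (m : ℕ) : RQ :=
  Polynomial.C (((-1)^m / (m.factorial : ℚ))) * (descPochhammer RQ m).eval (Polynomial.X - 1)

lemma ec_zero : ec 0 = 1 := by
  simp [ec, descPochhammer_zero]

lemma ec_succ (m : ℕ) :
    (Polynomial.C ((m:ℚ)+1)) * ec (m+1) = ((Polynomial.C ((m:ℚ)+1)) - Polynomial.X) * ec m := by
  have hdp : (descPochhammer RQ (m+1)).eval (Polynomial.X - 1)
      = (descPochhammer RQ m).eval (Polynomial.X - 1) * (Polynomial.X - 1 - Polynomial.C (m:ℚ)) := by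
    rw [descPochhammer_succ_right, eval_mul]
    congr 1
    simp [eval_sub, eval_X, eval_natCast]
  have hsc : ((m:ℚ)+1) * ((-1)^(m+1) / (((m+1).factorial : ℕ) : ℚ)) = -((-1)^m / ((m.factorial:ℕ):ℚ)) := by
    rw [Nat.factorial_succ]
    have h1 : ((m.factorial : ℕ) : ℚ) ≠ 0 := by positivity
    push_cast
    field_simp
    ring
  have hCm : (Polynomial.C ((m:ℚ)+1) : RQ) = Polynomial.C (m:ℚ) + 1 := by
    rw [map_add, map_one]
  calc Polynomial.C ((m:ℚ)+1) * ec (m+1)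
      = Polynomial.C (((m:ℚ)+1) * ((-1)^(m+1) / (((m+1).factorial:ℕ):ℚ))) *
          ((descPochhammer RQ m).eval (Polynomial.X - 1) * (Polynomial.X - 1 - Polynomial.C (m:ℚ))) := by
        rw [ec, hdp, map_mul]; ring
    _ = Polynomial.C (-((-1)^m / ((m.factorial:ℕ):ℚ))) *
          ((descPochhammer RQ m).eval (Polynomial.X - 1) * (Polynomial.X - 1 - Polynomial.C (m:ℚ))) := by
        rw [hsc]
    _ = (Polynomial.C ((m:ℚ)+1) - Polynomial.X) * ec m := by
        rw [map_neg, ec, hCm]; ring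

lemma coeff_eta (j n : ℕ) :
    PowerSeries.coeff n (etaFactor j) = if j ∣ n then ec (n / j) else 0 := by
  rw [etaFactor, coeff_mk]
  split
  · rw [ec, Polynomial.smul_eq_C_mul]
  · rfl

lemma ec_succ' (m : ℕ) :
    (((m:ℕ)+1) : RQ) * ec (m+1) = ((((m:ℕ)+1) : RQ) - Polynomial.X) * ec m := by
  have h := ec_succ m
  have hcast : ((((m:ℕ)+1 : ℕ)) : RQ) = Polynomial.C ((m:ℚ)+1) := by
    push_cast
    simp [Polynomial.C_eq_natCast]
  rw [show (((m:ℕ)+1) : RQ) = ((((m:ℕ)+1 : ℕ)) : RQ) by push_cast; ring, hcast]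
  exact h

lemma coeff_Xpow_mul' (f : RQ⟦X⟧) (j n : ℕ) :
    PowerSeries.coeff n ((X:RQ⟦X⟧)^j * f) = if j ≤ n then PowerSeries.coeff (n-j) f else 0 := by
  by_cases h : j ≤ n
  · rw [if_pos h]
    conv_lhs => rw [show n = (n-j) + j from (Nat.sub_add_cancel h).symm]
    exact PowerSeries.coeff_X_pow_mul f j (n-j)
  · rw [if_neg h, PowerSeries.coeff_mul]
    apply Finset.sum_eq_zero
    intro p hp
    rw [Finset.HasAntidiagonal.mem_antidiagonal] at hp
    have : p.1 ≠ j := by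
      intro hpj
      exact h (hpj ▸ (hp ▸ Nat.le_add_right p.1 p.2))
    rw [PowerSeries.coeff_X_pow, if_neg this, zero_mul]

lemma dXpow (j : ℕ) (hj : j ≠ 0) :
    d⁄dX RQ ((X:RQ⟦X⟧)^j) = PowerSeries.C ((j:ℕ) : RQ) * (X:RQ⟦X⟧)^(j-1) := by
  refine PowerSeries.ext fun n => ?_
  rw [PowerSeries.coeff_derivative, PowerSeries.coeff_X_pow, PowerSeries.coeff_C_mul,
    PowerSeries.coeff_X_pow]
  by_cases h : n + 1 = j
  · rw [if_pos h, if_pos (by omega : n = j - 1), one_mul, mul_one]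
    subst h
    push_cast
    simp [Polynomial.C_eq_natCast]
  · rw [if_neg h, if_neg (by omega : ¬ n = j - 1), zero_mul, mul_zero]

lemma eta_ode (j : ℕ) (hj : j ≠ 0) :
    (1 - (X:RQ⟦X⟧)^j) * d⁄dX RQ (etaFactor j)
      = PowerSeries.C (((j:ℕ):RQ) * (1 - Polynomial.X)) * ((X:RQ⟦X⟧)^(j-1) * etaFactor j) := by
  refine PowerSeries.ext fun n => ?_
  rw [sub_mul, one_mul, map_sub, PowerSeries.coeff_derivative, coeff_Xpow_mul',
    PowerSeries.coeff_C_mul, coeff_Xpow_mul']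
  by_cases hdvd : j ∣ (n+1)
  · obtain ⟨m, hm⟩ := hdvd
    rcases m with _ | m'
    · rw [Nat.mul_zero] at hm; omega
    rw [Nat.mul_succ] at hm
    have hj1 : j - 1 ≤ n := by omega
    rw [if_pos hj1]
    have hidx : n - (j-1) = j * m' := by omega
    have h1 : PowerSeries.coeff (n+1) (etaFactor j) = ec (m'+1) := by
      rw [coeff_eta, if_pos ⟨m'+1, by rw [Nat.mul_succ]; omega⟩,
        show (n+1)/j = m'+1 from by
          rw [show n+1 = j*(m'+1) from by rw [Nat.mul_succ]; omega,
            Nat.mul_div_cancel_left _ (Nat.pos_of_ne_zero hj)]]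
    have h2 : PowerSeries.coeff (n - (j-1)) (etaFactor j) = ec m' := by
      rw [coeff_eta, hidx, if_pos ⟨m', rfl⟩, Nat.mul_div_cancel_left _ (Nat.pos_of_ne_zero hj)]
    rw [h1, h2]
    have key : ((j:ℕ):RQ) * ((((m':ℕ):RQ)+1)) * ec (m'+1)
        = ((j:ℕ):RQ) * (((((m':ℕ):RQ)+1)) - Polynomial.X) * ec m' := by
      have h := ec_succ' m'
      calc ((j:ℕ):RQ) * ((((m':ℕ):RQ)+1)) * ec (m'+1)
          = ((j:ℕ):RQ) * (((((m':ℕ):RQ)+1)) * ec (m'+1)) := by ring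
        _ = ((j:ℕ):RQ) * ((((((m':ℕ):RQ)+1)) - Polynomial.X) * ec m') := by rw [h]
        _ = _ := by ring
    by_cases hmj : j ≤ n
    · rw [if_pos hmj]
      have h3 : PowerSeries.coeff (n - j) (d⁄dX RQ (etaFactor j)) = ec m' * (((n-j:ℕ):RQ) + 1) := by
        rw [PowerSeries.coeff_derivative]
        congr 1
        rw [coeff_eta]
        have hidx2 : n - j + 1 = j * m' := by omega
        rw [hidx2, if_pos ⟨m', rfl⟩, Nat.mul_div_cancel_left _ (Nat.pos_of_ne_zero hj)]
      rw [h3]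
      have e1 : ((n:ℕ):RQ) + 1 = ((j:ℕ):RQ) * ((m':ℕ):RQ) + ((j:ℕ):RQ) := by
        have := congrArg (Nat.cast : ℕ → RQ) hm
        push_cast at this
        linear_combination this
      have e2 : ((n-j:ℕ):RQ) + 1 = ((j:ℕ):RQ) * ((m':ℕ):RQ) := by
        have h4 : n - j + 1 = j * m' := by omega
        have := congrArg (Nat.cast : ℕ → RQ) h4
        push_cast at this
        linear_combination this
      linear_combination key + ec (m'+1) * e1 - ec m' * e2
    · rw [if_neg hmj]
      have hjm0 : j * m' = 0 := by omega
      have hm'0 : m' = 0 := by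
        rcases Nat.mul_eq_zero.mp hjm0 with h | h
        · exact absurd h hj
        · exact h
      subst hm'0
      have e1 : ((n:ℕ):RQ) + 1 = ((j:ℕ):RQ) := by
        have h4 : n + 1 = j := by omega
        have := congrArg (Nat.cast : ℕ → RQ) h4
        push_cast at this
        linear_combination this
      rw [e1, ec_zero]
      have key' := key
      simp only [Nat.cast_zero, zero_add, ec_zero, mul_one] at key'
      linear_combination key'
  · have h1 : PowerSeries.coeff (n+1) (etaFactor j) = 0 := by
      rw [coeff_eta, if_neg hdvd]
    rw [h1, zero_mul]
    by_cases hj1 : j - 1 ≤ n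
    · rw [if_pos hj1]
      have hnd : ¬ j ∣ (n - (j-1)) := by
        rintro ⟨c, hc⟩
        exact hdvd ⟨c+1, by rw [Nat.mul_succ]; omega⟩
      have h2 : PowerSeries.coeff (n - (j-1)) (etaFactor j) = 0 := by
        rw [coeff_eta, if_neg hnd]
      rw [h2, mul_zero]
      by_cases hmj : j ≤ n
      · rw [if_pos hmj, PowerSeries.coeff_derivative]
        have hnd2 : ¬ j ∣ (n - j + 1) := by
          rintro ⟨c, hc⟩
          exact hdvd ⟨c+1, by rw [Nat.mul_succ]; omega⟩
        rw [coeff_eta, if_neg hnd2, zero_mul, sub_zero]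
      · rw [if_neg hmj, sub_zero]
    · rw [if_neg hj1, if_neg (by omega), mul_zero, sub_zero]

noncomputable def Ffin (N : ℕ) : RQ⟦X⟧ := ∏ j ∈ Finset.Icc 1 N, etaFactor j

noncomputable def Efin (N : ℕ) : RQ⟦X⟧ := ∏ j ∈ Finset.Icc 1 N, (1 - (X:RQ⟦X⟧)^j)

lemma main_ode (N : ℕ) :
    Efin N * d⁄dX RQ (Ffin N)
      = PowerSeries.C (Polynomial.X - 1) * (d⁄dX RQ (Efin N) * Ffin N) := by
  induction N with
  | zero =>
      simp only [Ffin, Efin, Finset.Icc_self, show Finset.Icc 1 0 = ∅ from rfl,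
        Finset.prod_empty, Derivation.map_one_eq_zero]
      ring
  | succ N ih =>
      have hins : Finset.Icc 1 (N+1) = insert (N+1) (Finset.Icc 1 N) :=
        (Finset.insert_Icc_right_eq_Icc_add_one (by omega)).symm
      have hnot : (N+1) ∉ Finset.Icc 1 N := by simp
      have hF : Ffin (N+1) = etaFactor (N+1) * Ffin N := by
        rw [Ffin, hins, Finset.prod_insert hnot]; rfl
      have hE : Efin (N+1) = (1 - (X:RQ⟦X⟧)^(N+1)) * Efin N := by
        rw [Efin, hins, Finset.prod_insert hnot]; rfl
      have hde : d⁄dX RQ (1 - (X:RQ⟦X⟧)^(N+1))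
          = - (PowerSeries.C (((N+1:ℕ):RQ)) * (X:RQ⟦X⟧)^N) := by
        refine PowerSeries.ext fun n => ?_
        rw [PowerSeries.coeff_derivative, map_sub, map_neg, PowerSeries.coeff_C_mul,
          PowerSeries.coeff_one, PowerSeries.coeff_X_pow, PowerSeries.coeff_X_pow,
          if_neg (by omega : ¬ n + 1 = 0)]
        by_cases h : n = N
        · subst h
          rw [if_pos rfl, if_pos rfl, mul_one]
          push_cast
          ring
        · rw [if_neg (by omega : ¬ n + 1 = N + 1), if_neg h, mul_zero, neg_zero, sub_zero,
            zero_mul]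
      have hsingle := eta_ode (N+1) (by omega)
      rw [Nat.add_sub_cancel] at hsingle
      have lf : d⁄dX RQ (etaFactor (N+1) * Ffin N)
          = etaFactor (N+1) * d⁄dX RQ (Ffin N) + Ffin N * d⁄dX RQ (etaFactor (N+1)) := by
        have h := PowerSeries.derivativeFun_mul (etaFactor (N+1)) (Ffin N)
        rw [smul_eq_mul, smul_eq_mul] at h
        exact h
      have le : d⁄dX RQ ((1 - (X:RQ⟦X⟧)^(N+1)) * Efin N)
          = (1 - (X:RQ⟦X⟧)^(N+1)) * d⁄dX RQ (Efin N) + Efin N * d⁄dX RQ (1 - (X:RQ⟦X⟧)^(N+1)) := by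
        have h := PowerSeries.derivativeFun_mul (1 - (X:RQ⟦X⟧)^(N+1)) (Efin N)
        rw [smul_eq_mul, smul_eq_mul] at h
        exact h
      have hCC : PowerSeries.C ((((N+1:ℕ)):RQ) * (1 - Polynomial.X))
          = - (PowerSeries.C (Polynomial.X - 1) * PowerSeries.C (((N+1:ℕ)):RQ)) := by
        rw [← map_mul, ← map_neg]
        congr 1
        ring
      rw [hF, hE, lf, le, hde]
      rw [hCC] at hsingle
      linear_combination (Efin N * Ffin N) * hsingle +
        ((1 - (X:RQ⟦X⟧)^(N+1)) * etaFactor (N+1)) * ih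

lemma coeff_mul_eta (n j : ℕ) (hj : n < j) (f : RQ⟦X⟧) :
    PowerSeries.coeff n (f * etaFactor j) = PowerSeries.coeff n f := by
  rw [PowerSeries.coeff_mul]
  rw [Finset.sum_eq_single (n, 0)]
  · rw [coeff_eta, if_pos (dvd_zero j), Nat.zero_div, ec_zero, mul_one]
  · rintro ⟨a, b⟩ hab hne
    rw [Finset.HasAntidiagonal.mem_antidiagonal] at hab
    have hb : b ≠ 0 := by
      rintro rfl
      exact hne (by simp [← hab])
    have hbd : ¬ j ∣ b := by
      intro hd
      have := Nat.le_of_dvd (Nat.pos_of_ne_zero hb) hd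
      omega
    rw [coeff_eta, if_neg hbd, mul_zero]
  · intro h
    exact absurd (Finset.HasAntidiagonal.mem_antidiagonal.mpr (by simp)) h

lemma coeff_mul_prod_eta (n : ℕ) (s : Finset ℕ) (h : ∀ j ∈ s, n < j) (f : RQ⟦X⟧) :
    PowerSeries.coeff n (f * ∏ j ∈ s, etaFactor j) = PowerSeries.coeff n f := by
  induction s using Finset.induction_on with
  | empty => simp
  | @insert j s' hns ih =>
      rw [Finset.prod_insert hns, show f * (etaFactor j * ∏ l ∈ s', etaFactor l)
          = (f * ∏ l ∈ s', etaFactor l) * etaFactor j from by ring,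
        coeff_mul_eta n j (h j (Finset.mem_insert_self j s')),
        ih (fun l hl => h l (Finset.mem_insert_of_mem hl))]

lemma coeff_Ffin_stable (n N : ℕ) (h : n ≤ N) :
    PowerSeries.coeff n (Ffin N) = PowerSeries.coeff n (Ffin n) := by
  have hsplit : Finset.Icc 1 N = Finset.Icc 1 n ∪ Finset.Ioc n N := by
    ext a
    simp only [Finset.mem_Icc, Finset.mem_Ioc, Finset.mem_union]
    omega
  have hdisj : Disjoint (Finset.Icc 1 n) (Finset.Ioc n N) := by
    rw [Finset.disjoint_left]
    intro a ha hb
    rw [Finset.mem_Icc] at ha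
    rw [Finset.mem_Ioc] at hb
    omega
  rw [Ffin, hsplit, Finset.prod_union hdisj, ← Ffin,
    coeff_mul_prod_eta n _ (fun j hj => (Finset.mem_Ioc.mp hj).1) (Ffin n)]

lemma hanPoly_eq (m N : ℕ) (h : m ≤ N) :
    hanPoly m = Polynomial.C ((m.factorial : ℕ) : ℚ) * PowerSeries.coeff m (Ffin N) := by
  rw [hanPoly, coeff_Ffin_stable m N h, Polynomial.smul_eq_C_mul]
  norm_cast

/-- integer coefficients of `∏ (1 - q^j)`. -/
noncomputable def eZ (t : ℕ) : ℤ :=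
  PowerSeries.coeff t (∏ j ∈ Finset.Icc 1 t, (1 - (X:ℤ⟦X⟧)^j))

lemma coeff_mul_one_sub_pow (n j : ℕ) (hj : n < j) {A : Type*} [CommRing A] (f : A⟦X⟧) :
    PowerSeries.coeff n (f * (1 - (X:A⟦X⟧)^j)) = PowerSeries.coeff n f := by
  rw [mul_sub, mul_one, map_sub, mul_comm, PowerSeries.coeff_mul]
  have : ∑ p ∈ Finset.HasAntidiagonal.antidiagonal n,
      PowerSeries.coeff p.1 ((X:A⟦X⟧)^j) * PowerSeries.coeff p.2 f = 0 := by
    apply Finset.sum_eq_zero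
    rintro ⟨a, b⟩ hab
    rw [Finset.HasAntidiagonal.mem_antidiagonal] at hab
    rw [PowerSeries.coeff_X_pow, if_neg (by omega), zero_mul]
  rw [this, sub_zero]

lemma coeff_prod_one_sub_pow_stable {A : Type*} [CommRing A] (n : ℕ) (s : Finset ℕ)
    (h : ∀ j ∈ s, n < j) (f : A⟦X⟧) :
    PowerSeries.coeff n (f * ∏ j ∈ s, (1 - (X:A⟦X⟧)^j)) = PowerSeries.coeff n f := by
  induction s using Finset.induction_on with
  | empty => simp
  | @insert j s' hns ih =>
      rw [Finset.prod_insert hns, show f * ((1 - (X:A⟦X⟧)^j) * ∏ l ∈ s', (1 - (X:A⟦X⟧)^l))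
          = (f * ∏ l ∈ s', (1 - (X:A⟦X⟧)^l)) * (1 - (X:A⟦X⟧)^j) from by ring,
        coeff_mul_one_sub_pow n j (h j (Finset.mem_insert_self j s')),
        ih (fun l hl => h l (Finset.mem_insert_of_mem hl))]

lemma coeff_EZ_stable (t N : ℕ) (h : t ≤ N) :
    PowerSeries.coeff t (∏ j ∈ Finset.Icc 1 N, (1 - (X:ℤ⟦X⟧)^j)) = eZ t := by
  have hsplit : Finset.Icc 1 N = Finset.Icc 1 t ∪ Finset.Ioc t N := by
    ext a
    simp only [Finset.mem_Icc, Finset.mem_Ioc, Finset.mem_union]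
    omega
  have hdisj : Disjoint (Finset.Icc 1 t) (Finset.Ioc t N) := by
    rw [Finset.disjoint_left]
    intro a ha hb
    rw [Finset.mem_Icc] at ha
    rw [Finset.mem_Ioc] at hb
    omega
  rw [hsplit, Finset.prod_union hdisj,
    coeff_prod_one_sub_pow_stable t _ (fun j hj => (Finset.mem_Ioc.mp hj).1), eZ]

lemma Efin_map (N : ℕ) {A : Type*} [CommRing A] (ρ : ℤ →+* A) :
    PowerSeries.map ρ (∏ j ∈ Finset.Icc 1 N, (1 - (X:ℤ⟦X⟧)^j))
      = ∏ j ∈ Finset.Icc 1 N, (1 - (X:A⟦X⟧)^j) := by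
  rw [map_prod]
  apply Finset.prod_congr rfl
  intro j _
  rw [map_sub, map_one, map_pow, PowerSeries.map_X]

lemma aE_eq (t N : ℕ) (h : t ≤ N) :
    PowerSeries.coeff t (Efin N) = Polynomial.C ((eZ t : ℚ)) := by
  have : Efin N = PowerSeries.map ((Polynomial.C : ℚ →+* RQ).comp (Int.castRingHom ℚ))
      (∏ j ∈ Finset.Icc 1 N, (1 - (X:ℤ⟦X⟧)^j)) := by
    rw [Efin_map]
    rfl
  rw [this, PowerSeries.coeff_map, coeff_EZ_stable t N h]
  rfl

lemma eZ_zero : eZ 0 = 1 := by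
  simp [eZ]

lemma hanPoly_rec (n : ℕ) :
    hanPoly (n+1) = ∑ t ∈ Finset.range (n+1),
      Polynomial.C ((eZ (t+1) : ℚ)) *
        ((Polynomial.X - 1) * (((t+1:ℕ)) : RQ) - (((n-t : ℕ)) : RQ)) *
        (((n.descFactorial t : ℕ)) : RQ) * hanPoly (n-t) := by
  have hfac : ∀ m : ℕ, m ≤ n+1 →
      hanPoly m = (((m.factorial : ℕ)) : RQ) * PowerSeries.coeff m (Ffin (n+1)) := by
    intro m hm
    rw [hanPoly_eq m (n+1) hm, Polynomial.C_eq_natCast]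
  have hterm : ∀ t, t ≤ n → (((n.descFactorial t : ℕ)) : RQ) * hanPoly (n-t)
      = (((n.factorial : ℕ)) : RQ) * PowerSeries.coeff (n-t) (Ffin (n+1)) := by
    intro t ht
    rw [hfac (n-t) (by omega)]
    have hh : (n-t).factorial * n.descFactorial t = n.factorial :=
      Nat.factorial_mul_descFactorial ht
    have hc := congrArg (fun z : ℕ => ((z : ℕ) : RQ)) hh
    push_cast at hc
    linear_combination (PowerSeries.coeff (n-t) (Ffin (n+1))) * hc
  have h0 := congrArg (PowerSeries.coeff n) (main_ode (n+1))
  rw [PowerSeries.coeff_mul, PowerSeries.coeff_C_mul, PowerSeries.coeff_mul,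
    Finset.Nat.sum_antidiagonal_eq_sum_range_succ_mk,
    Finset.Nat.sum_antidiagonal_eq_sum_range_succ_mk] at h0
  simp only [PowerSeries.coeff_derivative] at h0
  have hL : ∀ i ∈ Finset.range (n+1),
      PowerSeries.coeff i (Efin (n+1)) *
        (PowerSeries.coeff (n-i+1) (Ffin (n+1)) * ((((n-i):ℕ):RQ)+1))
      = Polynomial.C ((eZ i : ℚ)) *
        (PowerSeries.coeff (n-i+1) (Ffin (n+1)) * ((((n-i):ℕ):RQ)+1)) := by
    intro i hi
    rw [Finset.mem_range] at hi
    rw [aE_eq i (n+1) (by omega)]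
  have hR : ∀ i ∈ Finset.range (n+1),
      PowerSeries.coeff (i+1) (Efin (n+1)) * (((i:ℕ):RQ)+1) *
        PowerSeries.coeff (n-i) (Ffin (n+1))
      = Polynomial.C ((eZ (i+1) : ℚ)) * (((i:ℕ):RQ)+1) *
        PowerSeries.coeff (n-i) (Ffin (n+1)) := by
    intro i hi
    rw [Finset.mem_range] at hi
    rw [aE_eq (i+1) (n+1) (by omega)]
  rw [Finset.sum_congr rfl hL, Finset.sum_congr rfl hR] at h0
  -- second (subtracted) sum
  have hmain : (((n.factorial : ℕ)) : RQ) *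
      (∑ i ∈ Finset.range (n+1), Polynomial.C ((eZ i : ℚ)) *
        (PowerSeries.coeff (n-i+1) (Ffin (n+1)) * ((((n-i):ℕ):RQ)+1)))
      = hanPoly (n+1) + ∑ t ∈ Finset.range (n+1), Polynomial.C ((eZ (t+1) : ℚ)) *
          ((((n-t:ℕ)):RQ)) * ((((n.descFactorial t):ℕ)):RQ) * hanPoly (n-t) := by
    rw [Finset.sum_range_succ']
    rw [mul_add]
    have hg0 : (((n.factorial : ℕ)) : RQ) * (Polynomial.C ((eZ 0 : ℚ)) *
        (PowerSeries.coeff (n-0+1) (Ffin (n+1)) * ((((n-0):ℕ):RQ)+1))) = hanPoly (n+1) := by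
      rw [eZ_zero, hfac (n+1) le_rfl]
      have hfs : ((n+1).factorial : ℕ) = (n+1) * n.factorial := Nat.factorial_succ n
      have hc := congrArg (fun z : ℕ => ((z : ℕ) : RQ)) hfs
      push_cast at hc
      simp only [Nat.sub_zero, Int.cast_one, map_one, one_mul]
      linear_combination (-(PowerSeries.coeff (n+1) (Ffin (n+1)))) * hc
    rw [hg0]
    rw [Finset.sum_range_succ (fun t => Polynomial.C ((eZ (t+1) : ℚ)) *
          ((((n-t:ℕ)):RQ)) * ((((n.descFactorial t):ℕ)):RQ) * hanPoly (n-t)) n]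
    rw [Nat.sub_self]
    simp only [Nat.cast_zero, mul_zero, zero_mul, add_zero]
    rw [Finset.mul_sum]
    rw [add_comm]
    refine congrArg (hanPoly (n + 1) + ·) ?_
    apply Finset.sum_congr rfl
    intro i hi
    rw [Finset.mem_range] at hi
    have e1 : n - (i+1) + 1 = n - i := by omega
    have e2 : ((n - (i+1) : ℕ) : RQ) + 1 = ((n-i : ℕ) : RQ) := by
      have : (n - (i+1)) + 1 = n - i := by omega
      calc ((n - (i+1) : ℕ) : RQ) + 1 = (((n - (i+1)) + 1 : ℕ) : RQ) := by push_cast; ring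
        _ = _ := by rw [this]
    rw [e1, e2]
    linear_combination (Polynomial.C ((eZ (i+1) : ℚ)) * (((n-i:ℕ)):RQ)) * (hterm i (by omega)).symm
  -- now the target
  calc hanPoly (n+1)
      = ((((n.factorial : ℕ)) : RQ) *
          (∑ i ∈ Finset.range (n+1), Polynomial.C ((eZ i : ℚ)) *
            (PowerSeries.coeff (n-i+1) (Ffin (n+1)) * ((((n-i):ℕ):RQ)+1))))
        - ∑ t ∈ Finset.range (n+1), Polynomial.C ((eZ (t+1) : ℚ)) *
          ((((n-t:ℕ)):RQ)) * ((((n.descFactorial t):ℕ)):RQ) * hanPoly (n-t) := by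
        rw [hmain]; ring
    _ = (((n.factorial : ℕ)) : RQ) * ((Polynomial.X - 1) *
          ∑ i ∈ Finset.range (n+1), Polynomial.C ((eZ (i+1) : ℚ)) * (((i:ℕ):RQ)+1) *
            PowerSeries.coeff (n-i) (Ffin (n+1)))
        - ∑ t ∈ Finset.range (n+1), Polynomial.C ((eZ (t+1) : ℚ)) *
          ((((n-t:ℕ)):RQ)) * ((((n.descFactorial t):ℕ)):RQ) * hanPoly (n-t) := by
        rw [← h0]
    _ = ∑ t ∈ Finset.range (n+1), Polynomial.C ((eZ (t+1) : ℚ)) *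
        ((Polynomial.X - 1) * (((t+1:ℕ)) : RQ) - (((n-t : ℕ)) : RQ)) *
        (((n.descFactorial t : ℕ)) : RQ) * hanPoly (n-t) := by
        rw [Finset.mul_sum, Finset.mul_sum]
        rw [← Finset.sum_sub_distrib]
        apply Finset.sum_congr rfl
        intro t ht
        rw [Finset.mem_range] at ht
        have h1 := hterm t (by omega)
        have e3 : (((t+1:ℕ)) : RQ) = ((t:ℕ):RQ) + 1 := by push_cast; ring
        rw [e3]
        linear_combination (Polynomial.C ((eZ (t+1) : ℚ)) * (Polynomial.X - 1) * (((t:ℕ):RQ)+1)) * h1.symm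

noncomputable def PZ (t : ℕ) : ℤ⟦X⟧ := ∏ j ∈ Finset.Icc 1 t, (1 - (X:ℤ⟦X⟧)^j)

lemma PZ_succ (t : ℕ) : PZ (t+1) = PZ t * (1 - (X:ℤ⟦X⟧)^(t+1)) := by
  rw [PZ, ← Finset.insert_Icc_right_eq_Icc_add_one (by omega : 1 ≤ t + 1), Finset.prod_insert (by simp), mul_comm]
  rfl

lemma eZ_eq (t : ℕ) : eZ t = PowerSeries.coeff t (PZ t) := rfl

lemma coeff_mul_one_sub {A : Type*} [CommRing A] (f : A⟦X⟧) (j n : ℕ) :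
    PowerSeries.coeff n (f * (1 - (X:A⟦X⟧)^j))
      = PowerSeries.coeff n f - (if j ≤ n then PowerSeries.coeff (n-j) f else 0) := by
  rw [mul_sub, mul_one, map_sub]
  congr 1
  rw [mul_comm, PowerSeries.coeff_mul]
  by_cases h : j ≤ n
  · rw [if_pos h, Finset.sum_eq_single (j, n - j)]
    · rw [PowerSeries.coeff_X_pow, if_pos rfl, one_mul]
    · rintro ⟨a, b⟩ hab hne
      rw [Finset.HasAntidiagonal.mem_antidiagonal] at hab
      have : a ≠ j := fun haj => hne (by subst haj; simp [Prod.ext_iff]; omega)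
      rw [PowerSeries.coeff_X_pow, if_neg this, zero_mul]
    · intro hmem
      exact absurd (Finset.HasAntidiagonal.mem_antidiagonal.mpr (by omega)) hmem
  · rw [if_neg h]
    apply Finset.sum_eq_zero
    rintro ⟨a, b⟩ hab
    rw [Finset.HasAntidiagonal.mem_antidiagonal] at hab
    rw [PowerSeries.coeff_X_pow, if_neg (by omega), zero_mul]

lemma cPZ0 : ∀ m : ℕ, PowerSeries.coeff m (PZ 0) = if m = 0 then 1 else 0 := by
  intro m
  simp [PZ, PowerSeries.coeff_one]


lemma cPZ1_0 : PowerSeries.coeff 0 (PZ 1) = 1 := by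
  rw [show (PZ 1) = PZ 0 * (1 - (X:ℤ⟦X⟧)^1) from PZ_succ 0, coeff_mul_one_sub]
  norm_num [cPZ0]

lemma cPZ1_1 : PowerSeries.coeff 1 (PZ 1) = -1 := by
  rw [show (PZ 1) = PZ 0 * (1 - (X:ℤ⟦X⟧)^1) from PZ_succ 0, coeff_mul_one_sub]
  norm_num [cPZ0]

lemma cPZ1_2 : PowerSeries.coeff 2 (PZ 1) = 0 := by
  rw [show (PZ 1) = PZ 0 * (1 - (X:ℤ⟦X⟧)^1) from PZ_succ 0, coeff_mul_one_sub]
  norm_num [cPZ0]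

lemma cPZ1_3 : PowerSeries.coeff 3 (PZ 1) = 0 := by
  rw [show (PZ 1) = PZ 0 * (1 - (X:ℤ⟦X⟧)^1) from PZ_succ 0, coeff_mul_one_sub]
  norm_num [cPZ0]

lemma cPZ1_4 : PowerSeries.coeff 4 (PZ 1) = 0 := by
  rw [show (PZ 1) = PZ 0 * (1 - (X:ℤ⟦X⟧)^1) from PZ_succ 0, coeff_mul_one_sub]
  norm_num [cPZ0]

lemma cPZ1_5 : PowerSeries.coeff 5 (PZ 1) = 0 := by
  rw [show (PZ 1) = PZ 0 * (1 - (X:ℤ⟦X⟧)^1) from PZ_succ 0, coeff_mul_one_sub]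
  norm_num [cPZ0]

lemma cPZ2_0 : PowerSeries.coeff 0 (PZ 2) = 1 := by
  rw [show (PZ 2) = PZ 1 * (1 - (X:ℤ⟦X⟧)^2) from PZ_succ 1, coeff_mul_one_sub]
  norm_num [cPZ1_0]

lemma cPZ2_1 : PowerSeries.coeff 1 (PZ 2) = -1 := by
  rw [show (PZ 2) = PZ 1 * (1 - (X:ℤ⟦X⟧)^2) from PZ_succ 1, coeff_mul_one_sub]
  norm_num [cPZ1_1]

lemma cPZ2_2 : PowerSeries.coeff 2 (PZ 2) = -1 := by
  rw [show (PZ 2) = PZ 1 * (1 - (X:ℤ⟦X⟧)^2) from PZ_succ 1, coeff_mul_one_sub]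
  norm_num [cPZ1_0, cPZ1_2]

lemma cPZ2_3 : PowerSeries.coeff 3 (PZ 2) = 1 := by
  rw [show (PZ 2) = PZ 1 * (1 - (X:ℤ⟦X⟧)^2) from PZ_succ 1, coeff_mul_one_sub]
  norm_num [cPZ1_1, cPZ1_3]

lemma cPZ2_4 : PowerSeries.coeff 4 (PZ 2) = 0 := by
  rw [show (PZ 2) = PZ 1 * (1 - (X:ℤ⟦X⟧)^2) from PZ_succ 1, coeff_mul_one_sub]
  norm_num [cPZ1_2, cPZ1_4]

lemma cPZ2_5 : PowerSeries.coeff 5 (PZ 2) = 0 := by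
  rw [show (PZ 2) = PZ 1 * (1 - (X:ℤ⟦X⟧)^2) from PZ_succ 1, coeff_mul_one_sub]
  norm_num [cPZ1_3, cPZ1_5]

lemma cPZ3_0 : PowerSeries.coeff 0 (PZ 3) = 1 := by
  rw [show (PZ 3) = PZ 2 * (1 - (X:ℤ⟦X⟧)^3) from PZ_succ 2, coeff_mul_one_sub]
  norm_num [cPZ2_0]

lemma cPZ3_1 : PowerSeries.coeff 1 (PZ 3) = -1 := by
  rw [show (PZ 3) = PZ 2 * (1 - (X:ℤ⟦X⟧)^3) from PZ_succ 2, coeff_mul_one_sub]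
  norm_num [cPZ2_1]

lemma cPZ3_2 : PowerSeries.coeff 2 (PZ 3) = -1 := by
  rw [show (PZ 3) = PZ 2 * (1 - (X:ℤ⟦X⟧)^3) from PZ_succ 2, coeff_mul_one_sub]
  norm_num [cPZ2_2]

lemma cPZ3_3 : PowerSeries.coeff 3 (PZ 3) = 0 := by
  rw [show (PZ 3) = PZ 2 * (1 - (X:ℤ⟦X⟧)^3) from PZ_succ 2, coeff_mul_one_sub]
  norm_num [cPZ2_0, cPZ2_3]

lemma cPZ3_4 : PowerSeries.coeff 4 (PZ 3) = 1 := by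
  rw [show (PZ 3) = PZ 2 * (1 - (X:ℤ⟦X⟧)^3) from PZ_succ 2, coeff_mul_one_sub]
  norm_num [cPZ2_1, cPZ2_4]

lemma cPZ3_5 : PowerSeries.coeff 5 (PZ 3) = 1 := by
  rw [show (PZ 3) = PZ 2 * (1 - (X:ℤ⟦X⟧)^3) from PZ_succ 2, coeff_mul_one_sub]
  norm_num [cPZ2_2, cPZ2_5]

lemma cPZ4_0 : PowerSeries.coeff 0 (PZ 4) = 1 := by
  rw [show (PZ 4) = PZ 3 * (1 - (X:ℤ⟦X⟧)^4) from PZ_succ 3, coeff_mul_one_sub]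
  norm_num [cPZ3_0]

lemma cPZ4_1 : PowerSeries.coeff 1 (PZ 4) = -1 := by
  rw [show (PZ 4) = PZ 3 * (1 - (X:ℤ⟦X⟧)^4) from PZ_succ 3, coeff_mul_one_sub]
  norm_num [cPZ3_1]

lemma cPZ4_2 : PowerSeries.coeff 2 (PZ 4) = -1 := by
  rw [show (PZ 4) = PZ 3 * (1 - (X:ℤ⟦X⟧)^4) from PZ_succ 3, coeff_mul_one_sub]
  norm_num [cPZ3_2]

lemma cPZ4_3 : PowerSeries.coeff 3 (PZ 4) = 0 := by
  rw [show (PZ 4) = PZ 3 * (1 - (X:ℤ⟦X⟧)^4) from PZ_succ 3, coeff_mul_one_sub]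
  norm_num [cPZ3_3]

lemma cPZ4_4 : PowerSeries.coeff 4 (PZ 4) = 0 := by
  rw [show (PZ 4) = PZ 3 * (1 - (X:ℤ⟦X⟧)^4) from PZ_succ 3, coeff_mul_one_sub]
  norm_num [cPZ3_0, cPZ3_4]

lemma cPZ4_5 : PowerSeries.coeff 5 (PZ 4) = 2 := by
  rw [show (PZ 4) = PZ 3 * (1 - (X:ℤ⟦X⟧)^4) from PZ_succ 3, coeff_mul_one_sub]
  norm_num [cPZ3_1, cPZ3_5]

lemma cPZ5_0 : PowerSeries.coeff 0 (PZ 5) = 1 := by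
  rw [show (PZ 5) = PZ 4 * (1 - (X:ℤ⟦X⟧)^5) from PZ_succ 4, coeff_mul_one_sub]
  norm_num [cPZ4_0]

lemma cPZ5_1 : PowerSeries.coeff 1 (PZ 5) = -1 := by
  rw [show (PZ 5) = PZ 4 * (1 - (X:ℤ⟦X⟧)^5) from PZ_succ 4, coeff_mul_one_sub]
  norm_num [cPZ4_1]

lemma cPZ5_2 : PowerSeries.coeff 2 (PZ 5) = -1 := by
  rw [show (PZ 5) = PZ 4 * (1 - (X:ℤ⟦X⟧)^5) from PZ_succ 4, coeff_mul_one_sub]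
  norm_num [cPZ4_2]

lemma cPZ5_3 : PowerSeries.coeff 3 (PZ 5) = 0 := by
  rw [show (PZ 5) = PZ 4 * (1 - (X:ℤ⟦X⟧)^5) from PZ_succ 4, coeff_mul_one_sub]
  norm_num [cPZ4_3]

lemma cPZ5_4 : PowerSeries.coeff 4 (PZ 5) = 0 := by
  rw [show (PZ 5) = PZ 4 * (1 - (X:ℤ⟦X⟧)^5) from PZ_succ 4, coeff_mul_one_sub]
  norm_num [cPZ4_4]

lemma cPZ5_5 : PowerSeries.coeff 5 (PZ 5) = 1 := by
  rw [show (PZ 5) = PZ 4 * (1 - (X:ℤ⟦X⟧)^5) from PZ_succ 4, coeff_mul_one_sub]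
  norm_num [cPZ4_0, cPZ4_5]

lemma eZ_one : eZ 1 = -1 := by rw [eZ_eq]; exact cPZ1_1
lemma eZ_two : eZ 2 = -1 := by rw [eZ_eq]; exact cPZ2_2
lemma eZ_three : eZ 3 = 0 := by rw [eZ_eq]; exact cPZ3_3
lemma eZ_four : eZ 4 = 0 := by rw [eZ_eq]; exact cPZ4_4
lemma eZ_five : eZ 5 = 1 := by rw [eZ_eq]; exact cPZ5_5

noncomputable def rho5 : ℤ →+* ZMod 5 := Int.castRingHom (ZMod 5)

noncomputable def uZ : Polynomial ℤ := 1 - Polynomial.X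
noncomputable def AZ : Polynomial ℤ := uZ * (uZ^4 - 1)
noncomputable def sZ : ℕ → Polynomial ℤ
  | 0 => 1
  | 1 => uZ
  | 2 => 3*uZ + uZ^2
  | 3 => 3*uZ + 4*uZ^2 + uZ^3
  | 4 => uZ*(2 + 4*uZ + 3*uZ^2 + uZ^3)
  | _ => 0

noncomputable def sP (r : ℕ) : Polynomial (ZMod 5) := (sZ r).map rho5
noncomputable def AP : Polynomial (ZMod 5) := AZ.map rho5
noncomputable def tgt (n : ℕ) : Polynomial (ZMod 5) := sP (n % 5) * AP ^ (n / 5)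

lemma sP_def (r : ℕ) : (sZ r).map rho5 = sP r := rfl

lemma AP_def : AZ.map rho5 = AP := rfl

lemma map5_eq (p q g : Polynomial ℤ) (h : p = q + 5 * g) : p.map rho5 = q.map rho5 := by
  rw [h, Polynomial.map_add, Polynomial.map_mul]
  have h5 : (5 : Polynomial ℤ).map rho5 = 0 := by
    have e : (5 : Polynomial ℤ) = ((5:ℕ) : Polynomial ℤ) := by norm_cast
    rw [e, Polynomial.map_natCast, ← Polynomial.C_eq_natCast, ZMod.natCast_self, map_zero]
  rw [h5, zero_mul, add_zero]

lemma cast5_nat (a b : ℕ) (h : a % 5 = b % 5) :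
    ((a:ℕ) : Polynomial (ZMod 5)) = ((b:ℕ) : Polynomial (ZMod 5)) := by
  rw [← Polynomial.C_eq_natCast, ← Polynomial.C_eq_natCast]
  congr 1
  rw [ZMod.natCast_eq_natCast_iff]
  exact h

lemma descF_mod (m t : ℕ) (ht : t ≤ m % 5) :
    ((m.descFactorial t : ℕ) : Polynomial (ZMod 5))
      = (((m % 5).descFactorial t : ℕ) : Polynomial (ZMod 5)) := by
  induction t with
  | zero => simp
  | succ t ih =>
      rw [Nat.descFactorial_succ, Nat.descFactorial_succ]
      push_cast
      rw [show ((m.descFactorial t : ℕ) : Polynomial (ZMod 5))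
          = (((m % 5).descFactorial t : ℕ) : Polynomial (ZMod 5)) from ih (by omega)]
      have hmt : ((m - t : ℕ) : Polynomial (ZMod 5)) = ((m % 5 - t : ℕ) : Polynomial (ZMod 5)) :=
        cast5_nat _ _ (by omega)
      rw [hmt]

lemma dvd5_descF (m t : ℕ) (h5 : m % 5 < t) :
    ((m.descFactorial t : ℕ) : Polynomial (ZMod 5)) = 0 := by
  rw [← Polynomial.C_eq_natCast]
  have : ((m.descFactorial t : ℕ) : ZMod 5) = 0 := by
    rw [ZMod.natCast_eq_zero_iff]
    by_cases hm : t ≤ m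
    · rw [Nat.descFactorial_eq_prod_range]
      have hmem : m % 5 ∈ Finset.range t := Finset.mem_range.mpr h5
      have : (5:ℕ) ∣ (m - m % 5) := ⟨m / 5, by omega⟩
      exact dvd_trans this (Finset.dvd_prod_of_mem _ hmem)
    · rw [Nat.descFactorial_eq_zero_iff_lt.mpr (by omega)]
      exact dvd_zero 5
  rw [this, map_zero]

lemma tgt_rec (m : ℕ) :
    ∑ t ∈ Finset.range (m+1), Polynomial.C ((eZ (t+1) : ZMod 5)) *
      ((Polynomial.X - 1) * (((t+1:ℕ)) : Polynomial (ZMod 5)) - (((m-t:ℕ)) : Polynomial (ZMod 5))) *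
      (((m.descFactorial t : ℕ)) : Polynomial (ZMod 5)) * tgt (m-t)
    = tgt (m+1) := by
  have hr5 : m % 5 < 5 := Nat.mod_lt _ (by norm_num)
  -- restrict the sum to t ≤ m % 5
  have hsub : Finset.range (m % 5 + 1) ⊆ Finset.range (m+1) := by
    apply Finset.range_subset_range.mpr
    omega
  rw [← Finset.sum_subset hsub (by
    intro t _ ht2
    rw [Finset.mem_range, not_lt] at ht2
    rw [dvd5_descF m t (by rw [Finset.mem_range] at *; omega), mul_zero, zero_mul])]
  -- clean up each term
  have hclean : ∀ t ∈ Finset.range (m % 5 + 1),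
      Polynomial.C ((eZ (t+1) : ZMod 5)) *
        ((Polynomial.X - 1) * (((t+1:ℕ)) : Polynomial (ZMod 5)) - (((m-t:ℕ)) : Polynomial (ZMod 5))) *
        (((m.descFactorial t : ℕ)) : Polynomial (ZMod 5)) * tgt (m-t)
      = Polynomial.C ((eZ (t+1) : ZMod 5)) *
        ((Polynomial.X - 1) * (((t+1:ℕ)) : Polynomial (ZMod 5)) - (((m % 5 - t:ℕ)) : Polynomial (ZMod 5))) *
        ((((m % 5).descFactorial t : ℕ)) : Polynomial (ZMod 5)) * (sP (m % 5 - t) * AP ^ (m / 5)) := by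
    intro t ht
    rw [Finset.mem_range] at ht
    rw [descF_mod m t (by omega), cast5_nat (m-t) (m % 5 - t) (by omega)]
    have : tgt (m-t) = sP (m % 5 - t) * AP ^ (m / 5) := by
      rw [tgt, show (m-t) % 5 = m % 5 - t by omega, show (m-t)/5 = m/5 by omega]
    rw [this]
  rw [Finset.sum_congr rfl hclean]
  have hcase : m % 5 = 0 ∨ m % 5 = 1 ∨ m % 5 = 2 ∨ m % 5 = 3 ∨ m % 5 = 4 := by omega
  rcases hcase with h|h|h|h|h
  · rw [h]
    rw [tgt, show (m+1) % 5 = 1 from by omega, show (m+1)/5 = m/5 from by omega]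
    simp only [Finset.sum_range_succ, Finset.sum_range_zero, eZ_one, eZ_two, eZ_three, eZ_four, eZ_five]
    norm_num [eZ_one, eZ_two, eZ_three, eZ_four, eZ_five]
    have key := map5_eq ((1 - Polynomial.X) * sZ 0) ((sZ 1)) (0) (by simp only [sZ, uZ, AZ]; ring)
    simp only [Polynomial.map_add, Polynomial.map_mul, Polynomial.map_sub, Polynomial.map_one, Polynomial.map_X, Polynomial.map_ofNat, Polynomial.map_neg, sP_def, AP_def] at key
    linear_combination (AP ^ (m / 5)) * key
  · rw [h]
    rw [tgt, show (m+1) % 5 = 2 from by omega, show (m+1)/5 = m/5 from by omega]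
    simp only [Finset.sum_range_succ, Finset.sum_range_zero, eZ_one, eZ_two, eZ_three, eZ_four, eZ_five]
    norm_num [eZ_one, eZ_two, eZ_three, eZ_four, eZ_five]
    have key := map5_eq ((1 - (Polynomial.X - 1)) * sZ 1 + -((Polynomial.X - 1) * 2 * sZ 0)) ((sZ 2)) (0) (by simp only [sZ, uZ, AZ]; ring)
    simp only [Polynomial.map_add, Polynomial.map_mul, Polynomial.map_sub, Polynomial.map_one, Polynomial.map_X, Polynomial.map_ofNat, Polynomial.map_neg, sP_def, AP_def] at key
    linear_combination (AP ^ (m / 5)) * key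
  · rw [h]
    rw [tgt, show (m+1) % 5 = 3 from by omega, show (m+1)/5 = m/5 from by omega]
    simp only [Finset.sum_range_succ, Finset.sum_range_zero, eZ_one, eZ_two, eZ_three, eZ_four, eZ_five]
    norm_num [eZ_one, eZ_two, eZ_three, eZ_four, eZ_five]
    have key := map5_eq ((2 - (Polynomial.X - 1)) * sZ 2 + (1 - (Polynomial.X - 1) * 2) * 2 * sZ 1) ((sZ 3)) ((uZ + uZ^2)) (by simp only [sZ, uZ, AZ]; ring)
    simp only [Polynomial.map_add, Polynomial.map_mul, Polynomial.map_sub, Polynomial.map_one, Polynomial.map_X, Polynomial.map_ofNat, Polynomial.map_neg, sP_def, AP_def] at key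
    linear_combination (AP ^ (m / 5)) * key
  · rw [h]
    rw [tgt, show (m+1) % 5 = 4 from by omega, show (m+1)/5 = m/5 from by omega]
    simp only [Finset.sum_range_succ, Finset.sum_range_zero, eZ_one, eZ_two, eZ_three, eZ_four, eZ_five]
    norm_num [eZ_one, eZ_two, eZ_three, eZ_four, eZ_five]
    have key := map5_eq ((3 - (Polynomial.X - 1)) * sZ 3 + (2 - (Polynomial.X - 1) * 2) * 3 * sZ 2) ((sZ 4)) ((5*uZ + 7*uZ^2 + 2*uZ^3)) (by simp only [sZ, uZ, AZ]; ring)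
    simp only [Polynomial.map_add, Polynomial.map_mul, Polynomial.map_sub, Polynomial.map_one, Polynomial.map_X, Polynomial.map_ofNat, Polynomial.map_neg, sP_def, AP_def] at key
    linear_combination (AP ^ (m / 5)) * key
  · rw [h]
    rw [tgt, show (m+1) % 5 = 0 from by omega, show (m+1)/5 = m/5 + 1 from by omega]
    simp only [Finset.sum_range_succ, Finset.sum_range_zero, eZ_one, eZ_two, eZ_three, eZ_four, eZ_five]
    norm_num [eZ_one, eZ_two, eZ_three, eZ_four, eZ_five]
    have hs0 : sP 0 = 1 := by simp [sP, sZ]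
    rw [hs0]
    have key := map5_eq ((4 - (Polynomial.X - 1)) * sZ 4 + (3 - (Polynomial.X - 1) * 2) * 4 * sZ 3 + (Polynomial.X - 1) * 5 * 24) (AZ) ((-15*uZ + 18*uZ^2 + 12*uZ^3 + 3*uZ^4)) (by simp only [sZ, uZ, AZ]; ring)
    simp only [Polynomial.map_add, Polynomial.map_mul, Polynomial.map_sub, Polynomial.map_one, Polynomial.map_X, Polynomial.map_ofNat, Polynomial.map_neg, sP_def, AP_def] at key
    linear_combination (AP ^ (m / 5)) * key
lemma hanPoly_zero : hanPoly 0 = 1 := by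
  rw [hanPoly]
  simp [show Finset.Icc 1 0 = ∅ from rfl]

lemma exists_int (n : ℕ) : ∃ Q : Polynomial ℤ,
    Q.map (Int.castRingHom ℚ) = hanPoly n ∧ Q.map rho5 = tgt n := by
  induction n using Nat.strong_induction_on with
  | _ n ih =>
    match n with
    | 0 =>
        refine ⟨1, ?_, ?_⟩
        · rw [Polynomial.map_one, hanPoly_zero]
        · rw [Polynomial.map_one, tgt]
          norm_num
          simp [sP, sZ]
    | (m+1) =>
        choose Qf hQ1 hQ2 using fun t (ht : t < m + 1) => ih t ht
        refine ⟨∑ t ∈ Finset.range (m+1),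
          Polynomial.C (eZ (t+1)) *
            ((Polynomial.X - 1) * (((t+1:ℕ)) : Polynomial ℤ) - (((m-t:ℕ)) : Polynomial ℤ)) *
            (((m.descFactorial t : ℕ)) : Polynomial ℤ) *
            Qf (m-t) (Nat.lt_succ_of_le (Nat.sub_le m t)), ?_, ?_⟩
        · rw [Polynomial.map_sum, hanPoly_rec m]
          apply Finset.sum_congr rfl
          intro t _
          rw [Polynomial.map_mul, Polynomial.map_mul, Polynomial.map_mul, Polynomial.map_sub,
            Polynomial.map_mul, Polynomial.map_sub, Polynomial.map_one, Polynomial.map_X,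
            Polynomial.map_natCast, Polynomial.map_natCast, Polynomial.map_C,
            hQ1 (m-t) _]
          norm_num [Int.coe_castRingHom]
        · rw [Polynomial.map_sum, ← tgt_rec m]
          apply Finset.sum_congr rfl
          intro t _
          rw [Polynomial.map_mul, Polynomial.map_mul, Polynomial.map_mul, Polynomial.map_sub,
            Polynomial.map_mul, Polynomial.map_sub, Polynomial.map_one, Polynomial.map_X,
            Polynomial.map_natCast, Polynomial.map_natCast, Polynomial.map_C,
            hQ2 (m-t) _]
          norm_num [rho5, Int.coe_castRingHom]

noncomputable def GP : Polynomial (ZMod 5) :=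
  Polynomial.C 2 + Polynomial.C 4 * Polynomial.X + Polynomial.C 3 * Polynomial.X^2 + Polynomial.X^3

lemma GP_coeff_big (d : ℕ) (hd : 4 ≤ d) : GP.coeff d = 0 := by
  apply Polynomial.coeff_eq_zero_of_natDegree_lt
  have h : GP.natDegree ≤ 3 := by
    rw [GP]
    compute_degree
  omega

lemma sP4_eq : sP 4 = Polynomial.X * GP := by
  have key := map5_eq (sZ 4)
      (Polynomial.X * ((2:Polynomial ℤ) + 4 * Polynomial.X + 3 * Polynomial.X^2 + Polynomial.X^3))
      (2 - 5*Polynomial.X + 3*Polynomial.X^2 - 2*Polynomial.X^3)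
      (by simp only [sZ, uZ]; ring)
  rw [show sP 4 = (sZ 4).map rho5 from rfl, key, Polynomial.map_mul, Polynomial.map_X]
  congr 1
  rw [GP]
  simp only [Polynomial.map_add, Polynomial.map_mul, Polynomial.map_pow, Polynomial.map_X,
    Polynomial.map_ofNat, map_ofNat]

lemma AP_eq : AP = Polynomial.X * (1 - Polynomial.X^4) := by
  have key := map5_eq AZ (Polynomial.X * (1 - Polynomial.X^4))
      (-Polynomial.X + 2*Polynomial.X^2 - 2*Polynomial.X^3 + Polynomial.X^4)
      (by simp only [AZ, uZ]; ring)
  rw [← AP_def, key, Polynomial.map_mul, Polynomial.map_sub, Polynomial.map_one,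
    Polynomial.map_pow, Polynomial.map_X]

lemma coeff_final (k m i : ℕ) (hi : i < 4) (hm : m ≤ k) :
    (Polynomial.X^(k+1) * (GP * (1 - Polynomial.X^4)^k) : Polynomial (ZMod 5)).coeff (k+1+4*m+i)
      = (-1)^m * (k.choose m : ZMod 5) * GP.coeff i := by
  rw [show k+1+4*m+i = (4*m+i) + (k+1) from by ring, Polynomial.coeff_X_pow_mul]
  rw [show (1 - Polynomial.X^4 : Polynomial (ZMod 5)) = -(Polynomial.X^4) + 1 from by ring,
    add_pow, Finset.mul_sum, Polynomial.finset_sum_coeff]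
  have hterm : ∀ j ∈ Finset.range (k+1),
      (GP * ((-(Polynomial.X^4 : Polynomial (ZMod 5)))^j * 1^(k-j) *
        ((k.choose j : ℕ) : Polynomial (ZMod 5)))).coeff (4*m+i)
      = ((-1:ZMod 5))^j * ((k.choose j : ℕ) : ZMod 5) *
          (if 4*j ≤ 4*m+i then GP.coeff (4*m+i-4*j) else 0) := by
    intro j _
    rw [show GP * ((-(Polynomial.X^4 : Polynomial (ZMod 5)))^j * 1^(k-j) *
          ((k.choose j : ℕ) : Polynomial (ZMod 5)))
        = Polynomial.C (((-1:ZMod 5))^j * ((k.choose j : ℕ) : ZMod 5)) *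
          (GP * Polynomial.X^(4*j)) from by
      rw [map_mul, map_pow, map_neg, map_one, Polynomial.C_eq_natCast, one_pow, neg_pow,
        pow_mul]
      ring]
    rw [Polynomial.coeff_C_mul, Polynomial.coeff_mul_X_pow']
  rw [Finset.sum_congr rfl hterm]
  rw [Finset.sum_eq_single m]
  · rw [if_pos (by omega : 4*m ≤ 4*m+i), show 4*m+i-4*m = i from by omega]
  · intro j hj hne
    rw [Finset.mem_range] at hj
    by_cases h4 : 4*j ≤ 4*m+i
    · have hjm : j < m := by omega
      rw [if_pos h4, GP_coeff_big _ (by omega), mul_zero]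
    · rw [if_neg h4, mul_zero]
  · intro h
    exact absurd (Finset.mem_range.mpr (by omega)) h

end CRMF

/-- For `n = 5k+4` and `i = 0,1,2,3`, the coefficient of `b^{k+1+4m+i}` in
`p_n(b)` is congruent mod 5 to `c_i·(-1)^m·C(k,m)` where
`(c_0,c_1,c_2,c_3) = (2,4,3,1)`. -/
theorem coeff_rotation_mod_five (k m i : ℕ) (hi : i < 4) (hmi : 4 * m + i ≤ 4 * k + 3)
    (P : Polynomial ℤ)
    (hP : P.map (Int.castRingHom ℚ) = hanPoly (5 * k + 4)) :
    ((P.coeff (k + 1 + 4 * m + i) : ZMod 5)) =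
      (if i = 0 then 2 else if i = 1 then 4 else if i = 2 then 3 else 1) *
        (-1) ^ m * (k.choose m : ZMod 5) := by
  obtain ⟨Q, hQ1, hQ2⟩ := exists_int (5*k+4)
  have hPQ : P = Q := Polynomial.map_injective (Int.castRingHom ℚ)
      Int.cast_injective (by rw [hP, hQ1])
  have hmk : m ≤ k := by omega
  have hc : ((P.coeff (k+1+4*m+i) : ℤ) : ZMod 5) = (Q.map rho5).coeff (k+1+4*m+i) := by
    rw [hPQ, Polynomial.coeff_map]
    rfl
  rw [hc, hQ2, tgt, show (5*k+4) % 5 = 4 from by omega, show (5*k+4)/5 = k from by omega,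
    sP4_eq, AP_eq]
  have hre : (Polynomial.X * GP) * (Polynomial.X * (1 - Polynomial.X^4))^k
      = Polynomial.X^(k+1) * (GP * (1 - Polynomial.X^4)^k) := by
    rw [mul_pow]
    ring
  rw [hre, coeff_final k m i hi hmk]
  interval_cases i <;>
    simp [GP, Polynomial.coeff_add, Polynomial.coeff_C_mul, Polynomial.coeff_C,
      Polynomial.coeff_X, Polynomial.coeff_X_pow] <;> ring
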